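/- Let C ⊆ ℝ^n be a nonempty compact convex set of diameter δ > 0 with set of extreme points V, and let f : ℝ^n → ℝ be convex, differentiable, and L-smooth on C. Let (α^t, S^t, x^t)_{t≥0} be a blended pairwise Frank-Wolfe (BPFW) sequence with line-search as defined in the context, started from α^0 the indicator weight of a single extreme point x^0 ∈ V. Then for every t ≥ 1, f(x^t) − min_{x∈C} f(x) ≤ 4Lδ²/t. -/

import Mathlib

open RealInnerProductSpace Classical Filter Set

section helpers

variable {n : ℕ}

lemma line_hasDerivAt (f : EuclideanSpace ℝ (Fin n) → ℝ) (G p u : EuclideanSpace ℝ (Fin n))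
    (hg : HasGradientAt f G p) :
    HasDerivAt (fun s : ℝ => f (p + s • u)) ⟪G, u⟫ 0 := by
  have h1 : HasDerivAt (fun s : ℝ => p + s • u) u 0 := by
    simpa using ((hasDerivAt_id (0:ℝ)).smul_const u).const_add p
  have hg' : HasFDerivAt f ((InnerProductSpace.toDual ℝ _) G) (p + (0:ℝ) • u) := by
    simpa using hg.hasFDerivAt
  have h2 := hg'.comp_hasDerivAt 0 h1
  simpa [Function.comp_def, InnerProductSpace.toDual_apply_apply] using h2

lemma slope_le_lim (f : EuclideanSpace ℝ (Fin n) → ℝ) (G p u : EuclideanSpace ℝ (Fin n))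
    (hg : HasGradientAt f G p) (M : ℝ)
    (h : ∀ s ∈ Set.Ioc (0:ℝ) 1, f (p + s • u) - f p ≤ s * M) :
    ⟪G, u⟫ ≤ M := by
  have hd := line_hasDerivAt f G p u hg
  have hslope : Tendsto (slope (fun s : ℝ => f (p + s • u)) 0)
      (nhdsWithin 0 (Set.Ioi 0)) (nhds ⟪G, u⟫) :=
    (hasDerivAt_iff_tendsto_slope.1 hd).mono_left
      (nhdsWithin_mono _ (fun y hy => ne_of_gt hy))
  refine le_of_tendsto hslope ?_
  filter_upwards [Ioc_mem_nhdsGT_of_mem (by constructor <;> norm_num : (0:ℝ) ∈ Set.Ico 0 1)]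
    with s hs
  rw [slope_def_field]
  simp only [zero_smul, add_zero, sub_zero]
  rw [div_le_iff₀ hs.1]
  calc f (p + s • u) - f p ≤ s * M := h s hs
  _ = M * s := by ring

lemma slope_ge_lim (f : EuclideanSpace ℝ (Fin n) → ℝ) (G p u : EuclideanSpace ℝ (Fin n))
    (hg : HasGradientAt f G p) (M : ℝ)
    (h : ∀ s ∈ Set.Ioc (0:ℝ) 1, s * M ≤ f (p + s • u) - f p) :
    M ≤ ⟪G, u⟫ := by
  have hg' : HasGradientAt (fun z => -f z) (-G) p := by
    rw [hasGradientAt_iff_hasFDerivAt]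
    rw [map_neg]; exact hg.hasFDerivAt.neg
  have := slope_le_lim (fun z => -f z) (-G) p u hg' (-M) ?_
  · rw [inner_neg_left] at this; linarith
  · intro s hs
    have := h s hs
    simp only [neg_sub_neg]
    nlinarith

lemma grad_ineq {C : Set (EuclideanSpace ℝ (Fin n))} (hC : Convex ℝ C)
    (f : EuclideanSpace ℝ (Fin n) → ℝ) (hconv : ConvexOn ℝ C f)
    (G p q : EuclideanSpace ℝ (Fin n)) (hp : p ∈ C) (hq : q ∈ C)
    (hg : HasGradientAt f G p) :
    f p + ⟪G, q - p⟫ ≤ f q := by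
  have := slope_le_lim f G p (q - p) hg (f q - f p) ?_
  · linarith
  · intro s hs
    have hcvx := hconv.2 hp hq (by linarith [hs.1, hs.2] : (0:ℝ) ≤ 1 - s) (le_of_lt hs.1)
      (by ring)
    have he : (1 - s) • p + s • q = p + s • (q - p) := by module
    rw [he] at hcvx
    simp only [smul_eq_mul] at hcvx
    nlinarith [hcvx]

lemma sum_update_pw (s : Finset (EuclideanSpace ℝ (Fin n))) (β : EuclideanSpace ℝ (Fin n) → ℝ)
    (a w : EuclideanSpace ℝ (Fin n)) (ha : a ∈ s) (hw : w ∈ s) (γ : ℝ) :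
    ∑ u ∈ s, (β u - γ*(if u = a then 1 else 0) + γ*(if u = w then 1 else 0)) • u
      = (∑ u ∈ s, β u • u) - γ • a + γ • w := by
  simp only [add_smul, sub_smul, Finset.sum_add_distrib, Finset.sum_sub_distrib,
    mul_ite, mul_one, mul_zero, ite_smul, zero_smul, Finset.sum_ite_eq', ha, hw, if_pos]

lemma sum_update_pw' (s : Finset (EuclideanSpace ℝ (Fin n))) (β : EuclideanSpace ℝ (Fin n) → ℝ)
    (a w : EuclideanSpace ℝ (Fin n)) (ha : a ∈ s) (hw : w ∈ s) (γ : ℝ) :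
    ∑ u ∈ s, (β u - γ*(if u = a then 1 else 0) + γ*(if u = w then 1 else 0))
      = (∑ u ∈ s, β u) - γ + γ := by
  simp only [Finset.sum_add_distrib, Finset.sum_sub_distrib,
    mul_ite, mul_one, mul_zero, Finset.sum_ite_eq', ha, hw, if_pos]

lemma sum_update_fw (s : Finset (EuclideanSpace ℝ (Fin n))) (β : EuclideanSpace ℝ (Fin n) → ℝ)
    (v : EuclideanSpace ℝ (Fin n)) (hv : v ∈ s) (γ : ℝ) :
    ∑ u ∈ s, ((1-γ)*β u + γ*(if u = v then 1 else 0)) • u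
      = (1-γ) • (∑ u ∈ s, β u • u) + γ • v := by
  simp only [add_smul, Finset.sum_add_distrib, mul_ite, mul_one, mul_zero, ite_smul, zero_smul,
    Finset.sum_ite_eq', hv, if_pos, Finset.smul_sum, mul_smul]

lemma step_decay_a {c h h' gap : ℝ} (hc : 0 < c) (hmono : h' ≤ h) (hgap : h ≤ gap)
    (hgood : h' ≤ h - (if gap ≤ c then gap^2/(2*c) else gap - c/2)) : h' ≤ 2*c := by
  split_ifs at hgood with hcase
  · linarith
  · linarith

lemma step_decay_b {c h h' gap : ℝ} (hc : 0 < c) (hmono : h' ≤ h) (hgap : h ≤ gap)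
    (hgap0 : 0 ≤ gap)
    (hgood : h' ≤ h - (if gap ≤ c then gap^2/(2*c) else gap - c/2))
    (k : ℕ) (hk : 1 ≤ k) (hh : h ≤ 2*c/k) : h' ≤ 2*c/(k+1) := by
  have hK : (1:ℝ) ≤ (k:ℝ) := by exact_mod_cast hk
  have hK0 : (0:ℝ) < (k:ℝ) := by linarith
  have hK10 : (0:ℝ) < (k:ℝ) + 1 := by linarith
  have hhk : h * k ≤ 2*c := by
    calc h * k ≤ (2*c/k) * k := by apply mul_le_mul_of_nonneg_right hh (le_of_lt hK0)
    _ = 2*c := by field_simp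
  have htriv : (0:ℝ) ≤ 2*c/((k:ℝ)+1) := by positivity
  split_ifs at hgood with hcase
  · rcases le_or_gt h 0 with h0 | h0
    · have : h' ≤ 0 := by nlinarith [sq_nonneg gap]
      linarith
    · have hgap2 : h^2 ≤ gap^2 := by nlinarith
      have hhc : h ≤ c := by linarith
      have key : h - h^2/(2*c) ≤ 2*c/((k:ℝ)+1) := by
        rw [le_div_iff₀ hK10, sub_mul]
        have e1 : (0:ℝ) ≤ (2*c - (k:ℝ)*h) * (2*c - h) :=
          mul_nonneg (by linarith) (by linarith)
        have e2 : h^2/(2*c)*(2*c) = h^2 := by field_simp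
        nlinarith [sq_nonneg h]
      calc h' ≤ h - gap^2/(2*c) := hgood
      _ ≤ h - h^2/(2*c) := by
          have : h^2/(2*c) ≤ gap^2/(2*c) := by gcongr
          linarith
      _ ≤ 2*c/((k:ℝ)+1) := key
  · rcases le_or_gt k 3 with h3 | h3
    · have h3' : (k:ℝ) ≤ 3 := by exact_mod_cast h3
      have h1 : h' ≤ c/2 := by linarith
      have h2 : c/2 ≤ 2*c/((k:ℝ)+1) := by rw [div_le_div_iff₀ (by norm_num) hK10]; nlinarith
      linarith
    · have h4 : (4:ℝ) ≤ (k:ℝ) := by exact_mod_cast h3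
      have h1 : h' ≤ h - c/2 := by linarith
      have h5 : 2*c/(k:ℝ) ≤ c/2 := by rw [div_le_div_iff₀ hK0 (by norm_num)]; nlinarith
      have : h' ≤ 0 := by linarith
      linarith

lemma gamma_eq {c gap : ℝ} (hc : 0 < c) :
    (if gap ≤ c then gap/c else 1)*gap - (if gap ≤ c then gap/c else 1)^2*(c/2)
      = (if gap ≤ c then gap^2/(2*c) else gap - c/2) := by
  split_ifs with h
  · field_simp; ring
  · ring

end helpers

set_option maxHeartbeats 2000000 in
/-- Main lemma: the case `0 < L`. -/
theorem bpfw_main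
    (n : ℕ) (C : Set (EuclideanSpace ℝ (Fin n)))
    (hCne : C.Nonempty) (hCcomp : IsCompact C) (hCconv : Convex ℝ C)
    (V : Set (EuclideanSpace ℝ (Fin n))) (hV : V = Set.extremePoints ℝ C)
    (δ : ℝ) (hδ : 0 < δ) (hdiam : Metric.diam C = δ)
    (f : EuclideanSpace ℝ (Fin n) → ℝ)
    (g : EuclideanSpace ℝ (Fin n) → EuclideanSpace ℝ (Fin n))
    (L : ℝ) (hL : 0 < L)
    (hconv : ConvexOn ℝ C f)
    (hgrad : ∀ x ∈ C, HasGradientAt f (g x) x)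
    (hsmooth : ∀ x ∈ C, ∀ y ∈ C,
      f y ≤ f x + ⟪g x, y - x⟫ + L / 2 * ‖y - x‖ ^ 2)
    (α : ℕ → EuclideanSpace ℝ (Fin n) → ℝ)
    (x a w v : ℕ → EuclideanSpace ℝ (Fin n)) (η : ℕ → ℝ)
    (x0 : EuclideanSpace ℝ (Fin n)) (hx0V : x0 ∈ V)
    (hα0 : α 0 = fun u => if u = x0 then 1 else 0)
    (hαnn : ∀ t u, 0 ≤ α t u)
    (hαV : ∀ t u, α t u ≠ 0 → u ∈ V)
    (hαfin : ∀ t, (Function.support (α t)).Finite)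
    (hαsum : ∀ t, ∑ᶠ u, α t u = 1)
    (hx : ∀ t, x t = ∑ᶠ u, α t u • u)
    (haS : ∀ t, α t (a t) ≠ 0)
    (hamax : ∀ t, ∀ u, α t u ≠ 0 → ⟪g (x t), u⟫ ≤ ⟪g (x t), a t⟫)
    (hwS : ∀ t, α t (w t) ≠ 0)
    (hwmin : ∀ t, ∀ u, α t u ≠ 0 → ⟪g (x t), w t⟫ ≤ ⟪g (x t), u⟫)
    (hvV : ∀ t, v t ∈ V)
    (hvmin : ∀ t, ∀ u ∈ C, ⟪g (x t), v t⟫ ≤ ⟪g (x t), u⟫)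
    (hpw : ∀ t, ⟪g (x t), w t - a t⟫ ≤ ⟪g (x t), v t - x t⟫ →
      η t ∈ Set.Icc (0 : ℝ) (α t (a t)) ∧
      (∀ η' ∈ Set.Icc (0 : ℝ) (α t (a t)),
        f (x t + η t • (w t - a t)) ≤ f (x t + η' • (w t - a t))) ∧
      α (t + 1) = fun u =>
        α t u - η t * (if u = a t then 1 else 0)
          + η t * (if u = w t then 1 else 0))
    (hfw : ∀ t, ¬ ⟪g (x t), w t - a t⟫ ≤ ⟪g (x t), v t - x t⟫ →
      η t ∈ Set.Icc (0 : ℝ) 1 ∧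
      (∀ η' ∈ Set.Icc (0 : ℝ) 1,
        f (x t + η t • (v t - x t)) ≤ f (x t + η' • (v t - x t))) ∧
      α (t + 1) = fun u =>
        (1 - η t) * α t u + η t * (if u = v t then 1 else 0)) :
    ∀ t : ℕ, 1 ≤ t → ∀ y ∈ C, f (x t) - f y ≤ 4 * L * δ ^ 2 / (t : ℝ) := by
  classical
  set c : ℝ := L * δ ^ 2 with hcdef
  have hc : 0 < c := by positivity
  set gap : ℕ → ℝ := fun s => ⟪g (x s), x s - v s⟫ with hgapdef
  set Good : ℕ → Prop :=
    fun s => f (x (s+1)) ≤ f (x s) - (if gap s ≤ c then gap s^2/(2*c) else gap s - c/2)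
    with hGooddef
  set T : ℕ → Finset (EuclideanSpace ℝ (Fin n)) := fun s => (hαfin s).toFinset with hTdef
  set k : ℕ → ℕ := fun s => ((Finset.range s).filter Good).card with hkdef
  set d : ℕ → ℕ := fun s => ((Finset.range s).filter (fun j => ¬ Good j)).card with hddef
  have hVC : V ⊆ C := hV ▸ extremePoints_subset
  have hmemC : ∀ t u, α t u ≠ 0 → u ∈ C := fun t u h => hVC (hαV t u h)
  have hTmem : ∀ t u, u ∈ T t ↔ α t u ≠ 0 := fun t u => (hαfin t).mem_toFinset
  have hTsub : ∀ t, Function.support (α t) ⊆ ↑(T t) := by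
    intro t u hu; exact (hTmem t u).2 hu
  have hsum_s : ∀ t (s : Finset (EuclideanSpace ℝ (Fin n))),
      Function.support (α t) ⊆ ↑s → ∑ u ∈ s, α t u = 1 := by
    intro t s hs
    rw [← finsum_eq_sum_of_support_subset _ hs]; exact hαsum t
  have hx_s : ∀ t (s : Finset (EuclideanSpace ℝ (Fin n))),
      Function.support (α t) ⊆ ↑s → x t = ∑ u ∈ s, α t u • u := by
    intro t s hs
    rw [hx t]
    apply finsum_eq_sum_of_support_subset
    intro u hu
    apply hs
    intro h0
    apply hu
    simp [Function.mem_support.1, h0]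
  have hxC : ∀ t, x t ∈ C := by
    intro t
    rw [hx_s t (T t) (hTsub t)]
    exact hCconv.sum_mem (fun u _ => hαnn t u) (hsum_s t (T t) (hTsub t))
      (fun u hu => hmemC t u ((hTmem t u).1 hu))
  have hdist : ∀ p ∈ C, ∀ q ∈ C, ‖p - q‖ ≤ δ := by
    intro p hp q hq
    rw [← dist_eq_norm, ← hdiam]
    exact Metric.dist_le_diam_of_mem hCcomp.isBounded hp hq
  have hGI : ∀ p ∈ C, ∀ q ∈ C, f p + ⟪g p, q - p⟫ ≤ f q := by
    intro p hp q hq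
    exact grad_ineq hCconv f hconv (g p) p q hp hq (hgrad p hp)
  have hLip : ∀ p ∈ C, ∀ q ∈ C, ⟪g q - g p, q - p⟫ ≤ L * ‖q - p‖^2 := by
    intro p hp q hq
    have h1 := hsmooth p hp q hq
    have h2 := hsmooth q hq p hp
    have e1 : ⟪g q, p - q⟫ = -⟪g q, q - p⟫ := by
      rw [← inner_neg_right]; congr 1; abel
    have e2 : ‖p - q‖ = ‖q - p‖ := norm_sub_rev p q
    rw [e1, e2] at h2
    have e3 : ⟪g q - g p, q - p⟫ = ⟪g q, q - p⟫ - ⟪g p, q - p⟫ := inner_sub_left _ _ _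
    nlinarith
  have hgap0 : ∀ t, 0 ≤ gap t := by
    intro t
    have := hvmin t (x t) (hxC t)
    have e : gap t = ⟪g (x t), x t⟫ - ⟪g (x t), v t⟫ := inner_sub_right _ _ _
    linarith
  have hvC : ∀ t, v t ∈ C := fun t => hVC (hvV t)
  have haT : ∀ t, a t ∈ T t := fun t => (hTmem t (a t)).2 (haS t)
  have hwT : ∀ t, w t ∈ T t := fun t => (hTmem t (w t)).2 (hwS t)
  -- membership of pairwise points
  have hpwC : ∀ t γ, 0 ≤ γ → γ ≤ α t (a t) → x t + γ • (w t - a t) ∈ C := by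
    intro t γ hγ0 hγA
    have hβnn : ∀ u ∈ T t,
        0 ≤ α t u - γ*(if u = a t then 1 else 0) + γ*(if u = w t then 1 else 0) := by
      intro u _
      rcases eq_or_ne u (a t) with h1 | h1
      · rcases eq_or_ne u (w t) with h2 | h2
        · simp only [if_pos h1, if_pos h2, mul_one]; linarith [hαnn t u]
        · have hA' : γ ≤ α t u := by rw [h1]; exact hγA
          simp only [if_pos h1, if_neg h2, mul_one, mul_zero]; linarith
      · rcases eq_or_ne u (w t) with h2 | h2
        · simp only [if_neg h1, if_pos h2, mul_one, mul_zero]; linarith [hαnn t u]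
        · simp only [if_neg h1, if_neg h2, mul_zero]; linarith [hαnn t u]
    have hβsum : ∑ u ∈ T t,
        (α t u - γ*(if u = a t then 1 else 0) + γ*(if u = w t then 1 else 0)) = 1 := by
      rw [sum_update_pw' (T t) (α t) (a t) (w t) (haT t) (hwT t) γ,
        hsum_s t (T t) (hTsub t)]
      ring
    have hβpt : ∑ u ∈ T t,
        (α t u - γ*(if u = a t then 1 else 0) + γ*(if u = w t then 1 else 0)) • u
          = x t + γ • (w t - a t) := by
      rw [sum_update_pw (T t) (α t) (a t) (w t) (haT t) (hwT t) γ,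
        ← hx_s t (T t) (hTsub t)]
      module
    rw [← hβpt]
    exact hCconv.sum_mem hβnn hβsum (fun u hu => hmemC t u ((hTmem t u).1 hu))
  -- iterate formulas
  have hx1pw : ∀ t, ⟪g (x t), w t - a t⟫ ≤ ⟪g (x t), v t - x t⟫ →
      x (t+1) = x t + η t • (w t - a t) := by
    intro t hcnd
    obtain ⟨hη, hls, hupd⟩ := hpw t hcnd
    have hsupp : Function.support (α (t+1)) ⊆ ↑(T t) := by
      intro u hu
      rw [hupd] at hu
      simp only [Function.mem_support] at hu
      by_contra hni
      have h0 : α t u = 0 := by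
        by_contra hne; exact hni ((hTmem t u).2 hne)
      have hua : u ≠ a t := fun e => haS t (e ▸ h0)
      have huw : u ≠ w t := fun e => hwS t (e ▸ h0)
      simp [h0, hua, huw] at hu
    rw [hx_s (t+1) (T t) hsupp, hupd]
    simp only []
    rw [sum_update_pw (T t) (α t) (a t) (w t) (haT t) (hwT t) (η t),
      ← hx_s t (T t) (hTsub t)]
    module
  have hx1fw : ∀ t, ¬ ⟪g (x t), w t - a t⟫ ≤ ⟪g (x t), v t - x t⟫ →
      x (t+1) = x t + η t • (v t - x t) := by
    intro t hcnd
    obtain ⟨hη, hls, hupd⟩ := hfw t hcnd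
    have hsupp : Function.support (α (t+1)) ⊆ ↑(insert (v t) (T t)) := by
      intro u hu
      rw [hupd] at hu
      simp only [Function.mem_support] at hu
      by_contra hni
      simp only [Finset.coe_insert, Set.mem_insert_iff, Finset.mem_coe] at hni
      push_neg at hni
      have h0 : α t u = 0 := by
        by_contra hne; exact hni.2 ((hTmem t u).2 hne)
      simp [h0, hni.1] at hu
    have hsub2 : Function.support (α t) ⊆ ↑(insert (v t) (T t)) := by
      intro u hu
      simp only [Finset.coe_insert, Set.mem_insert_iff, Finset.mem_coe]
      exact Or.inr ((hTsub t) hu)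
    rw [hx_s (t+1) (insert (v t) (T t)) hsupp, hupd]
    simp only []
    rw [sum_update_fw (insert (v t) (T t)) (α t) (v t) (Finset.mem_insert_self _ _) (η t),
      ← hx_s t (insert (v t) (T t)) hsub2]
    module
  -- monotonicity
  have hmono : ∀ t, f (x (t+1)) ≤ f (x t) := by
    intro t
    by_cases hcnd : ⟪g (x t), w t - a t⟫ ≤ ⟪g (x t), v t - x t⟫
    · obtain ⟨hη, hls, hupd⟩ := hpw t hcnd
      rw [hx1pw t hcnd]
      have := hls 0 ⟨le_refl 0, hαnn t (a t)⟩
      simpa using this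
    · obtain ⟨hη, hls, hupd⟩ := hfw t hcnd
      rw [hx1fw t hcnd]
      have := hls 0 ⟨le_refl 0, zero_le_one⟩
      simpa using this
  -- support evolution
  have hsupp_mono : ∀ t u, α (t+1) u ≠ 0 → (α t u ≠ 0 ∨ u = v t) := by
    intro t u h1
    by_cases hcnd : ⟪g (x t), w t - a t⟫ ≤ ⟪g (x t), v t - x t⟫
    · obtain ⟨hη, hls, hupd⟩ := hpw t hcnd
      rw [hupd] at h1
      left
      by_cases h0 : α t u = 0
      · exfalso
        have hua : u ≠ a t := fun e => haS t (e ▸ h0)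
        have huw : u ≠ w t := fun e => hwS t (e ▸ h0)
        simp [h0, hua, huw] at h1
      · exact h0
    · obtain ⟨hη, hls, hupd⟩ := hfw t hcnd
      rw [hupd] at h1
      by_cases huv : u = v t
      · exact Or.inr huv
      · left
        by_cases h0 : α t u = 0
        · exfalso; simp [h0, huv] at h1
        · exact h0
  have hgapeq : ∀ s, ⟪g (x s), v s - x s⟫ = -gap s := by
    intro s
    have he : v s - x s = -(x s - v s) := by abel
    rw [he, inner_neg_right, hgapdef]
  -- the dichotomy
  have hdich : ∀ t, Good t ∨ (∀ u, α (t+1) u ≠ 0 → (α t u ≠ 0 ∧ u ≠ a t)) := by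
    intro t
    set γh : ℝ := if gap t ≤ c then gap t / c else 1 with hγhdef
    have hγh0 : 0 ≤ γh := by
      rw [hγhdef]; split_ifs
      · exact div_nonneg (hgap0 t) (le_of_lt hc)
      · norm_num
    have hγh1 : γh ≤ 1 := by
      rw [hγhdef]; split_ifs with hcc
      · rw [div_le_one hc]; exact hcc
      · exact le_rfl
    have hγhle : γh ≤ gap t / c := by
      rw [hγhdef]; split_ifs with hcc
      · exact le_rfl
      · rw [le_div_iff₀ hc]; push_neg at hcc; linarith
    have hkey : ∀ (u : EuclideanSpace ℝ (Fin n)) (γ : ℝ), 0 ≤ γ → x t + γ • u ∈ C →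
        ‖u‖ ≤ δ → ⟪g (x t), u⟫ ≤ -gap t →
        f (x t + γ • u) ≤ f (x t) - (γ * gap t - γ^2*(c/2)) := by
      intro u γ hγ hz hn hi
      have hs := hsmooth (x t) (hxC t) (x t + γ • u) hz
      have e1 : x t + γ • u - x t = γ • u := by abel
      rw [e1, real_inner_smul_right] at hs
      have e2 : ‖γ • u‖^2 = γ^2 * ‖u‖^2 := by
        rw [norm_smul]; rw [mul_pow]; rw [Real.norm_eq_abs, sq_abs]
      rw [e2] at hs
      have e3 : ‖u‖^2 ≤ δ^2 := by nlinarith [norm_nonneg u]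
      have e4 : L/2*(γ^2*‖u‖^2) ≤ γ^2 * (c/2) := by
        rw [hcdef]
        nlinarith [mul_le_mul_of_nonneg_left e3 (by positivity : (0:ℝ) ≤ γ^2 * (L/2))]
      nlinarith [mul_le_mul_of_nonneg_left hi hγ]
    have hGoal : ∀ s:ℕ, f (x (s+1)) ≤ f (x s) -
        (if gap s ≤ c then gap s^2/(2*c) else gap s - c/2) → Good s := by
      intro s hs; rw [hGooddef]; exact hs
    by_cases hcnd : ⟪g (x t), w t - a t⟫ ≤ ⟪g (x t), v t - x t⟫
    · -- pairwise step
      obtain ⟨hη, hls, hupd⟩ := hpw t hcnd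
      have hA0 : 0 < α t (a t) := lt_of_le_of_ne (hαnn t (a t)) (Ne.symm (haS t))
      have hiwa : ⟪g (x t), w t - a t⟫ ≤ -gap t := by rw [← hgapeq t]; exact hcnd
      by_cases hAγ : γh ≤ α t (a t)
      · -- good pairwise step
        left
        apply hGoal
        have hzC := hpwC t γh hγh0 hAγ
        have hnorm : ‖w t - a t‖ ≤ δ := hdist (w t) (hmemC t _ (hwS t)) (a t) (hmemC t _ (haS t))
        calc f (x (t+1)) = f (x t + η t • (w t - a t)) := by rw [hx1pw t hcnd]
        _ ≤ f (x t + γh • (w t - a t)) := hls γh ⟨hγh0, hAγ⟩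
        _ ≤ f (x t) - (γh * gap t - γh^2*(c/2)) := hkey _ γh hγh0 hzC hnorm hiwa
        _ ≤ f (x t) - (if gap t ≤ c then gap t^2/(2*c) else gap t - c/2) := by
            have := gamma_eq (c := c) (gap := gap t) hc
            rw [← hγhdef] at this
            linarith
      · -- drop step
        right
        push_neg at hAγ
        have hcA : c * α t (a t) < gap t := by
          have h5 : α t (a t) < gap t / c := lt_of_lt_of_le hAγ hγhle
          rw [lt_div_iff₀ hc] at h5; linarith
        have hgap_pos : 0 < gap t := lt_of_le_of_lt (by positivity) hcA
        have hgd : gap t ≤ ⟪g (x t), a t - w t⟫ := by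
          have he : a t - w t = -(w t - a t) := by abel
          rw [he, inner_neg_right]
          linarith
        have hwa : w t ≠ a t := by
          intro e
          rw [e] at hgd
          simp only [sub_self, inner_zero_right] at hgd
          linarith
        have hηA : η t = α t (a t) := by
          by_contra hne
          have hηlt : η t < α t (a t) := lt_of_le_of_ne hη.2 hne
          have hη0 : 0 ≤ η t := hη.1
          have hpC : x t + η t • (w t - a t) ∈ C := hpwC t (η t) hη0 hη.2
          have hstep1 : 0 ≤ ⟪g (x t + η t • (w t - a t)), w t - a t⟫ := by
            have key := slope_ge_lim f (g (x t + η t • (w t - a t)))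
                (x t + η t • (w t - a t)) ((α t (a t) - η t) • (w t - a t))
                (hgrad _ hpC) 0 ?_
            · rw [real_inner_smul_right] at key
              nlinarith [key]
            · intro s hs
              have hγ' : η t + s*(α t (a t) - η t) ∈ Set.Icc 0 (α t (a t)) :=
                ⟨by nlinarith [hs.1], by nlinarith [hs.1, hs.2]⟩
              have hlss := hls (η t + s*(α t (a t) - η t)) hγ'
              have he : x t + η t • (w t - a t) + s • ((α t (a t) - η t) • (w t - a t))
                  = x t + (η t + s*(α t (a t) - η t)) • (w t - a t) := by module
              rw [he]
              simp only [mul_zero]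
              linarith
          rcases eq_or_lt_of_le hη0 with hz0 | hz0
          · have hpx : x t + η t • (w t - a t) = x t := by rw [← hz0]; simp
            rw [hpx] at hstep1
            have he : ⟪g (x t), w t - a t⟫ = -⟪g (x t), a t - w t⟫ := by
              rw [← inner_neg_right]; congr 1; abel
            linarith
          · have hlip := hLip (x t) (hxC t) (x t + η t • (w t - a t)) hpC
            have hpe : x t + η t • (w t - a t) - x t = η t • (w t - a t) := by abel
            rw [hpe, real_inner_smul_right] at hlip
            have hnorm : ‖w t - a t‖ ≤ δ :=
              hdist (w t) (hmemC t _ (hwS t)) (a t) (hmemC t _ (haS t))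
            have hn2 : ‖η t • (w t - a t)‖^2 = η t^2 * ‖w t - a t‖^2 := by
              rw [norm_smul, mul_pow, Real.norm_eq_abs, sq_abs]
            rw [hn2] at hlip
            -- hlip : η t * ⟪gp - gx, d⟫ ≤ L * (η t ^2 * ‖d‖^2)
            have h6 : ⟪g (x t + η t • (w t - a t)) - g (x t), w t - a t⟫ ≤ η t * c := by
              have hd2 : ‖w t - a t‖^2 ≤ δ^2 := by nlinarith [norm_nonneg (w t - a t)]
              have hub : L * (η t^2 * ‖w t - a t‖^2) ≤ η t * (η t * c) := by
                rw [hcdef]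
                nlinarith [mul_le_mul_of_nonneg_left hd2 (by positivity : (0:ℝ) ≤ η t^2 * L)]
              have h66 := le_trans hlip hub
              exact le_of_mul_le_mul_left h66 hz0
            have h7 : ⟪g (x t + η t • (w t - a t)), w t - a t⟫
                = ⟪g (x t), w t - a t⟫ + ⟪g (x t + η t • (w t - a t)) - g (x t), w t - a t⟫ := by
              rw [← inner_add_left]; congr 1; abel
            have h8 : ⟪g (x t), w t - a t⟫ = -⟪g (x t), a t - w t⟫ := by
              rw [← inner_neg_right]; congr 1; abel
            have h9 : η t * c < α t (a t) * c :=
              mul_lt_mul_of_pos_right hηlt hc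
            nlinarith
        intro u hu
        rw [hupd] at hu
        simp only [] at hu
        have hua : u ≠ a t := by
          intro e
          rw [e, if_pos rfl, if_neg (Ne.symm hwa), hηA] at hu
          simp at hu
        refine ⟨?_, hua⟩
        by_cases h0 : α t u = 0
        · exfalso
          have huw : u ≠ w t := fun e => hwS t (e ▸ h0)
          rw [if_neg hua, if_neg huw, h0] at hu
          simp at hu
        · exact h0
    · -- FW step
      obtain ⟨hη, hls, hupd⟩ := hfw t hcnd
      left
      apply hGoal
      have hivx : ⟪g (x t), v t - x t⟫ ≤ -gap t := le_of_eq (hgapeq t)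
      have hzC : x t + γh • (v t - x t) ∈ C := by
        have hh := hCconv (hxC t) (hvC t) (by linarith : (0:ℝ) ≤ 1 - γh) hγh0 (by ring)
        have he : (1-γh) • x t + γh • v t = x t + γh • (v t - x t) := by module
        rwa [he] at hh
      have hnorm : ‖v t - x t‖ ≤ δ := hdist (v t) (hvC t) (x t) (hxC t)
      calc f (x (t+1)) = f (x t + η t • (v t - x t)) := by rw [hx1fw t hcnd]
      _ ≤ f (x t + γh • (v t - x t)) := hls γh ⟨hγh0, hγh1⟩
      _ ≤ f (x t) - (γh * gap t - γh^2*(c/2)) := hkey _ γh hγh0 hzC hnorm hivx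
      _ ≤ f (x t) - (if gap t ≤ c then gap t^2/(2*c) else gap t - c/2) := by
          have := gamma_eq (c := c) (gap := gap t) hc
          rw [← hγhdef] at this
          linarith
  -- counting
  have hkd : ∀ t, k t + d t = t := by
    intro t
    simpa [hkdef, hddef] using
      Finset.card_filter_add_card_filter_not (s := Finset.range t) Good
  have hTpos : ∀ t, 1 ≤ (T t).card := by
    intro t
    refine Finset.card_pos.2 ⟨a t, ?_⟩
    exact (hTmem t (a t)).2 (haS t)
  have hksucc : ∀ m, k (m+1) = if Good m then k m + 1 else k m := by
    intro m
    simp only [hkdef, Finset.range_add_one, Finset.filter_insert]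
    split_ifs with hg
    · rw [Finset.card_insert_of_notMem (by simp)]
    · rfl
  have hdsucc : ∀ m, d (m+1) = if Good m then d m else d m + 1 := by
    intro m
    simp only [hddef, Finset.range_add_one, Finset.filter_insert]
    by_cases hg : Good m
    · rw [if_neg (by simpa using hg), if_pos hg]
    · rw [if_pos hg, if_neg hg, Finset.card_insert_of_notMem (by simp)]
  have hcount : ∀ t, (T t).card + d t ≤ 1 + k t := by
    intro t
    induction t with
    | zero =>
      have hT0 : T 0 = {x0} := by
        ext u
        rw [hTmem 0 u, hα0]
        simp only [Finset.mem_singleton]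
        constructor
        · intro hne; by_contra hne2; simp [hne2] at hne
        · intro he; simp [he]
      rw [hT0]
      simp [hkdef, hddef]
    | succ m ih =>
      by_cases hG : Good m
      · have hsub : T (m+1) ⊆ insert (v m) (T m) := by
          intro u hu
          rcases hsupp_mono m u ((hTmem _ u).1 hu) with h1 | h1
          · exact Finset.mem_insert_of_mem ((hTmem m u).2 h1)
          · rw [h1]; exact Finset.mem_insert_self _ _
        have hcard : (T (m+1)).card ≤ (T m).card + 1 :=
          le_trans (Finset.card_le_card hsub) (Finset.card_insert_le _ _)
        rw [hksucc m, hdsucc m, if_pos hG, if_pos hG]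
        omega
      · have hdrop := (hdich m).resolve_left hG
        have hsub : T (m+1) ⊆ (T m).erase (a m) := by
          intro u hu
          obtain ⟨h1, h2⟩ := hdrop u ((hTmem _ u).1 hu)
          exact Finset.mem_erase.2 ⟨h2, (hTmem m u).2 h1⟩
        have hcard : (T (m+1)).card ≤ (T m).card - 1 := by
          rw [← Finset.card_erase_of_mem (haT m)]
          exact Finset.card_le_card hsub
        have hTm1 := hTpos m
        rw [hksucc m, hdsucc m, if_neg hG, if_neg hG]
        omega
  have hkt : ∀ t, t ≤ 2 * k t := by
    intro t
    have h1 := hcount t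
    have h2 := hTpos t
    have h3 := hkd t
    omega
  -- final bound for fixed y
  intro t ht y hy
  set h : ℕ → ℝ := fun s => f (x s) - f y with hhdef
  have hgaph : ∀ s, h s ≤ gap s := by
    intro s
    have h1 := hGI (x s) (hxC s) y hy
    have h2 := hvmin s y hy
    have e1 : ⟪g (x s), y - x s⟫ = ⟪g (x s), y⟫ - ⟪g (x s), x s⟫ := inner_sub_right _ _ _
    have e2 : gap s = ⟪g (x s), x s⟫ - ⟪g (x s), v s⟫ := inner_sub_right _ _ _
    simp only [hhdef]
    linarith
  have hdecay : ∀ s, 1 ≤ k s → h s ≤ 2*c/(k s) := by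
    intro s
    induction s with
    | zero => intro h1; simp [hkdef] at h1
    | succ m ih =>
      intro h1
      have hkm : k (m+1) = if Good m then k m + 1 else k m := by
        simp only [hkdef, Finset.range_add_one, Finset.filter_insert]
        split_ifs with hg
        · rw [Finset.card_insert_of_notMem (by simp)]
        · rfl
      by_cases hG : Good m
      · have hGm : f (x (m+1)) ≤ f (x m) - (if gap m ≤ c then gap m^2/(2*c) else gap m - c/2) := by
          have := hG; rw [hGooddef] at this; exact this
        have hmm : h (m+1) ≤ h m := sub_le_sub_right (hmono m) (f y)
        have hgd : h (m+1) ≤ h m - (if gap m ≤ c then gap m^2/(2*c) else gap m - c/2) := by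
          simp only [hhdef]; linarith
        rw [hkm, if_pos hG]
        rcases Nat.eq_zero_or_pos (k m) with h0 | hpos
        · have hda := step_decay_a hc hmm (hgaph m) hgd
          rw [h0]
          norm_num
          linarith
        · have hm := ih hpos
          have h2 := step_decay_b hc hmm (hgaph m) (hgap0 m) hgd (k m) hpos hm
          push_cast
          push_cast at h2
          exact h2
      · rw [hkm] at h1 ⊢
        rw [if_neg hG] at h1 ⊢
        have hm := ih h1
        calc h (m+1) ≤ h m := sub_le_sub_right (hmono m) (f y)
        _ ≤ 2*c/(k m) := hm
  have hk1 : 1 ≤ k t := by have := hkt t; omega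
  have hdt := hdecay t hk1
  have hkR : (0:ℝ) < (k t : ℝ) := by exact_mod_cast hk1
  have htR : (0:ℝ) < (t : ℝ) := by exact_mod_cast ht
  have hfrac : 2*c/(k t : ℝ) ≤ 4*c/(t : ℝ) := by
    rw [div_le_div_iff₀ hkR htR]
    have h2k : (t:ℝ) ≤ 2*(k t : ℝ) := by exact_mod_cast hkt t
    nlinarith
  have hfinal : f (x t) - f y ≤ 4*c/(t:ℝ) := le_trans hdt hfrac
  calc f (x t) - f y ≤ 4*c/(t:ℝ) := hfinal
  _ = 4 * L * δ ^ 2 / (t:ℝ) := by rw [hcdef]; ring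

set_option maxHeartbeats 1000000 in
/-- Sublinear convergence of the blended pairwise Frank-Wolfe
algorithm (BPFW) with line-search. -/
theorem bpfw_sublinear_convergence
    (n : ℕ) (C : Set (EuclideanSpace ℝ (Fin n)))
    (hCne : C.Nonempty) (hCcomp : IsCompact C) (hCconv : Convex ℝ C)
    (V : Set (EuclideanSpace ℝ (Fin n))) (hV : V = Set.extremePoints ℝ C)
    (δ : ℝ) (hδ : 0 < δ) (hdiam : Metric.diam C = δ)
    (f : EuclideanSpace ℝ (Fin n) → ℝ)
    (g : EuclideanSpace ℝ (Fin n) → EuclideanSpace ℝ (Fin n))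
    (L : ℝ)
    (hconv : ConvexOn ℝ C f)
    (hgrad : ∀ x ∈ C, HasGradientAt f (g x) x)
    (hsmooth : ∀ x ∈ C, ∀ y ∈ C,
      f y ≤ f x + ⟪g x, y - x⟫ + L / 2 * ‖y - x‖ ^ 2)
    -- the BPFW sequence: weights `α t`, iterates `x t`, away vertices `a t`,
    -- local FW vertices `w t`, FW vertices `v t`, step sizes `η t`
    (α : ℕ → EuclideanSpace ℝ (Fin n) → ℝ)
    (x a w v : ℕ → EuclideanSpace ℝ (Fin n)) (η : ℕ → ℝ)
    (x0 : EuclideanSpace ℝ (Fin n)) (hx0V : x0 ∈ V)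
    (hα0 : α 0 = fun u => if u = x0 then 1 else 0)
    (hαnn : ∀ t u, 0 ≤ α t u)
    (hαV : ∀ t u, α t u ≠ 0 → u ∈ V)
    (hαfin : ∀ t, (Function.support (α t)).Finite)
    (hαsum : ∀ t, ∑ᶠ u, α t u = 1)
    (hx : ∀ t, x t = ∑ᶠ u, α t u • u)
    (haS : ∀ t, α t (a t) ≠ 0)
    (hamax : ∀ t, ∀ u, α t u ≠ 0 → ⟪g (x t), u⟫ ≤ ⟪g (x t), a t⟫)
    (hwS : ∀ t, α t (w t) ≠ 0)
    (hwmin : ∀ t, ∀ u, α t u ≠ 0 → ⟪g (x t), w t⟫ ≤ ⟪g (x t), u⟫)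
    (hvV : ∀ t, v t ∈ V)
    (hvmin : ∀ t, ∀ u ∈ C, ⟪g (x t), v t⟫ ≤ ⟪g (x t), u⟫)
    -- local pairwise step
    (hpw : ∀ t, ⟪g (x t), w t - a t⟫ ≤ ⟪g (x t), v t - x t⟫ →
      η t ∈ Set.Icc (0 : ℝ) (α t (a t)) ∧
      (∀ η' ∈ Set.Icc (0 : ℝ) (α t (a t)),
        f (x t + η t • (w t - a t)) ≤ f (x t + η' • (w t - a t))) ∧
      α (t + 1) = fun u =>
        α t u - η t * (if u = a t then 1 else 0)
          + η t * (if u = w t then 1 else 0))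
    -- FW step
    (hfw : ∀ t, ¬ ⟪g (x t), w t - a t⟫ ≤ ⟪g (x t), v t - x t⟫ →
      η t ∈ Set.Icc (0 : ℝ) 1 ∧
      (∀ η' ∈ Set.Icc (0 : ℝ) 1,
        f (x t + η t • (v t - x t)) ≤ f (x t + η' • (v t - x t))) ∧
      α (t + 1) = fun u =>
        (1 - η t) * α t u + η t * (if u = v t then 1 else 0)) :
    ∀ t : ℕ, 1 ≤ t → ∀ y ∈ C, f (x t) - f y ≤ 4 * L * δ ^ 2 / (t : ℝ) := by
  have hpair : ∃ p ∈ C, ∃ q ∈ C, p ≠ q := by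
    by_contra hno
    push_neg at hno
    have hsub : C.Subsingleton := fun p hp q hq => hno p hp q hq
    rw [Metric.diam_subsingleton hsub] at hdiam
    linarith
  obtain ⟨p, hp, q, hq, hpq⟩ := hpair
  have hL0 : 0 ≤ L := by
    have h1 := hsmooth p hp q hq
    have h2 := grad_ineq hCconv f hconv (g p) p q hp hq (hgrad p hp)
    have hne : q - p ≠ 0 := sub_ne_zero.2 (Ne.symm hpq)
    have h3 : 0 < ‖q - p‖ := norm_pos_iff.2 hne
    nlinarith [pow_pos h3 2]
  rcases eq_or_lt_of_le hL0 with hL | hL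
  · intro t ht y hy
    have htR : (0:ℝ) < (t : ℝ) := by exact_mod_cast ht
    have hbound : ∀ ε : ℝ, 0 < ε → f (x t) - f y ≤ 4 * ε * δ^2 / t := by
      intro ε hε
      have hsm' : ∀ p' ∈ C, ∀ q' ∈ C,
          f q' ≤ f p' + ⟪g p', q' - p'⟫ + ε / 2 * ‖q' - p'‖ ^ 2 := by
        intro p' hp' q' hq'
        have hs := hsmooth p' hp' q' hq'
        rw [← hL] at hs
        nlinarith [mul_nonneg (le_of_lt hε) (sq_nonneg ‖q' - p'‖)]
      exact bpfw_main n C hCne hCcomp hCconv V hV δ hδ hdiam f g ε hε hconv hgrad hsm'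
        α x a w v η x0 hx0V hα0 hαnn hαV hαfin hαsum hx haS hamax hwS hwmin hvV hvmin
        hpw hfw t ht y hy
    have h0 : f (x t) - f y ≤ 0 := by
      by_contra hpos
      push_neg at hpos
      have hb := hbound ((f (x t) - f y) * t / (8 * δ^2)) (by positivity)
      have he : 4 * ((f (x t) - f y) * t / (8 * δ^2)) * δ^2 / t = (f (x t) - f y)/2 := by
        field_simp
        ring
      rw [he] at hb
      linarith
    calc f (x t) - f y ≤ 0 := h0
    _ ≤ 4 * L * δ^2 / t := by
        rw [← hL]
        simp
  · exact bpfw_main n C hCne hCcomp hCconv V hV δ hδ hdiam f g L hL hconv hgrad hsmooth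
      α x a w v η x0 hx0V hα0 hαnn hαV hαfin hαsum hx haS hamax hwS hwmin hvV hvmin hpw hfw
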